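/- Let K be a finite field of odd characteristic, d an even natural number dividing |K|-1, and η_o a generator of the group of multiplicative characters of K trivial on d-th powers. Then η_o(-1)^{d(d-2)/8} = η_K(2d), where η_K is the quadratic character of K*. -/

import Mathlib

open Polynomial in
private lemma aux_prod_one_sub {K : Type*} [Field K] {d : ℕ} (hd0 : 0 < d) {ζ : K}
    (hζ : IsPrimitiveRoot ζ d) :
    ∏ j ∈ Finset.Ioo 0 d, (1 - ζ ^ j) = (d : K) := by
  classical
  haveI : NeZero d := ⟨hd0.ne'⟩
  have himg : nthRootsFinset d (1 : K) = (Finset.range d).image (ζ ^ ·) := by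
    ext x
    simp only [mem_nthRootsFinset hd0 (1 : K), Finset.mem_image, Finset.mem_range]
    constructor
    · intro hx
      obtain ⟨i, hi, hix⟩ := hζ.eq_pow_of_pow_eq_one hx
      exact ⟨i, hi, hix⟩
    · rintro ⟨i, hi, rfl⟩
      rw [← pow_mul, mul_comm, pow_mul, hζ.pow_eq_one, one_pow]
  have hP : (X : K[X]) ^ d - 1 = ∏ j ∈ Finset.range d, (X - C (ζ ^ j)) := by
    rw [X_pow_sub_one_eq_prod hd0 hζ, himg,
      Finset.prod_image (fun i hi j hj h =>
        hζ.injOn_pow (Finset.mem_coe.mpr hi) (Finset.mem_coe.mpr hj) h)]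
  have hsplit : Finset.range d = insert 0 (Finset.Ioo 0 d) := by
    ext j
    simp only [Finset.mem_range, Finset.mem_insert, Finset.mem_Ioo]
    omega
  have hQ : ((X : K[X]) - 1) * (∑ i ∈ Finset.range d, X ^ i)
      = (X - 1) * ∏ j ∈ Finset.Ioo 0 d, (X - C (ζ ^ j)) := by
    rw [mul_comm ((X : K[X]) - 1), geom_sum_mul, hP, hsplit,
      Finset.prod_insert (by simp)]
    simp
  have hX1 : ((X : K[X]) - 1) ≠ 0 := by simpa using X_sub_C_ne_zero (1 : K)
  have hgeom := mul_left_cancel₀ hX1 hQ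
  have hev := congrArg (eval 1) hgeom
  simpa [eval_prod, eval_finset_sum] using hev.symm

private lemma aux_neg_one_pow {a b : ℕ} (h : a % 2 = b % 2) :
    ((-1 : ℂ)) ^ a = (-1) ^ b := by
  conv_lhs => rw [← Nat.div_add_mod a 2]
  conv_rhs => rw [← Nat.div_add_mod b 2]
  rw [pow_add, pow_add, pow_mul, pow_mul, h]
  norm_num

/-- For a finite field `K` of odd characteristic, `d` even dividing `|K| - 1`, and
`η_o` a generator of the group of multiplicative characters trivial on `d`-th powers,
`η_o(-1)^(d(d-2)/8) = η_K(2d)`, where `η_K` is the quadratic character. -/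
theorem stmt_8 {K : Type*} [Field K] [Fintype K] (hchar : ringChar K ≠ 2)
    (d : ℕ) (hd : Even d) (hd0 : 0 < d) (hdvd : d ∣ Fintype.card K - 1)
    (η_o : MulChar K ℂ) (hord : orderOf η_o = d)
    (hgen : ∀ η : MulChar K ℂ, η ^ d = 1 → ∃ k : ℕ, η = η_o ^ k)
    (η : MulChar K ℂ) (hη : η ≠ 1) (hη2 : η ^ 2 = 1) :
    (η_o (-1 : K)) ^ (d * (d - 2) / 8) = η (((2 * d : ℕ) : K)) := by
  classical
  obtain ⟨g, hg⟩ := IsCyclic.exists_generator (α := Kˣ)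
  set q := Fintype.card K with hq
  have hq1 : Fintype.card Kˣ = q - 1 := Fintype.card_units K
  have horderg : orderOf g = q - 1 := by
    rw [orderOf_eq_card_of_forall_mem_zpowers hg, Nat.card_eq_fintype_card, hq1]
  have hqodd : q % 2 = 1 := FiniteField.odd_card_of_char_ne_two hchar
  have hq2 : 1 < q := Fintype.one_lt_card
  obtain ⟨m, hm⟩ := hdvd
  obtain ⟨a, ha⟩ := hd
  have ha1 : 1 ≤ a := by omega
  have hm0 : 0 < m := by
    rcases Nat.eq_zero_or_pos m with h | h
    · rw [h, mul_zero] at hm; omega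
    · exact h
  have h2am : a * m + a * m = q - 1 := by
    rw [hm, ha]; ring
  have ham0 : 0 < a * m := Nat.mul_pos (by omega) hm0
  -- every unit is a power of g
  have hpow : ∀ x : Kˣ, ∃ k : ℕ, g ^ k = x := fun x =>
    (Submonoid.mem_powers_iff x g).mp ((mem_powers_iff_mem_zpowers).mpr (hg x))
  -- evaluation at g detects triviality
  have hev : ∀ χ : MulChar K ℂ, χ ((g : K)) = 1 → χ = 1 := by
    intro χ hχ
    apply MulChar.ext
    intro x
    obtain ⟨k, hk⟩ := hpow x
    rw [← hk, MulChar.one_apply_coe, Units.val_pow_eq_pow_val, map_pow, hχ, one_pow]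
  have hg1 : ((g : K)) ^ (q - 1) = 1 := by
    rw [← Units.val_pow_eq_pow_val, ← horderg, pow_orderOf_eq_one, Units.val_one]
  have hgne : ∀ k : ℕ, 0 < k → k < q - 1 → ((g : K)) ^ k ≠ 1 := by
    intro k hk0 hk1 hcontra
    rw [← Units.val_pow_eq_pow_val, Units.val_eq_one] at hcontra
    have hdvd' := orderOf_dvd_of_pow_eq_one hcontra
    rw [horderg] at hdvd'
    have := Nat.le_of_dvd hk0 hdvd'
    omega
  -- -1 = g^(a*m)
  have hneg : ((g : K)) ^ (a * m) = -1 := by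
    have hsq : ((g : K)) ^ (a * m) * ((g : K)) ^ (a * m) = 1 := by
      rw [← pow_add, h2am]; exact hg1
    rcases mul_self_eq_one_iff.mp hsq with h | h
    · exact absurd h (hgne (a * m) ham0 (by omega))
    · exact h
  have hη2' : η * η = 1 := by rw [← pow_two]; exact hη2
  have hηg : η ((g : K)) = -1 := by
    have hsq : η ((g : K)) * η ((g : K)) = 1 := by
      rw [← MulChar.mul_apply, hη2', MulChar.one_apply_coe]
    rcases mul_self_eq_one_iff.mp hsq with h | h
    · exact absurd (hev η h) hη
    · exact h
  have hηpow : ∀ k : ℕ, η (((g : K)) ^ k) = (-1 : ℂ) ^ k := by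
    intro k; rw [map_pow, hηg]
  have hηo_d : η_o ^ d = 1 := by rw [← hord]; exact pow_orderOf_eq_one η_o
  have hζc : η_o ((g : K)) ^ a = -1 := by
    have hsq : η_o ((g : K)) ^ a * η_o ((g : K)) ^ a = 1 := by
      rw [← pow_add, show a + a = d from ha.symm,
        ← MulChar.pow_apply' η_o (by omega) ((g : K)), hηo_d, MulChar.one_apply_coe]
    rcases mul_self_eq_one_iff.mp hsq with h | h
    · exfalso
      have h1 : (η_o ^ a) ((g : K)) = 1 := by
        rw [MulChar.pow_apply' η_o (by omega), h]
      have h2 := hev _ h1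
      have hdvd' := orderOf_dvd_of_pow_eq_one h2
      rw [hord] at hdvd'
      have := Nat.le_of_dvd (by omega) hdvd'
      omega
    · exact h
  have hηo_neg : η_o (-1 : K) = (-1 : ℂ) ^ m := by
    rw [← hneg, map_pow, pow_mul, hζc]
  -- the primitive d-th root of unity
  have hordm : orderOf (g ^ m : Kˣ) = d := by
    rw [orderOf_pow, horderg, hm, Nat.gcd_eq_right ⟨d, mul_comm d m⟩,
      Nat.mul_div_cancel _ hm0]
  have hζK : IsPrimitiveRoot (((g : K)) ^ m) d := by
    have h1 := IsPrimitiveRoot.orderOf (g ^ m : Kˣ)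
    rw [hordm] at h1
    have h2 := IsPrimitiveRoot.coe_units_iff.mpr h1
    rwa [Units.val_pow_eq_pow_val] at h2
  set ζK : K := ((g : K)) ^ m with hζKdef
  have hζKa : ζK ^ a = -1 := by
    rw [hζKdef, ← pow_mul, show m * a = a * m from mul_comm m a, hneg]
  have hprodd : ∏ j ∈ Finset.Ioo 0 d, (1 - ζK ^ j) = (d : K) :=
    aux_prod_one_sub hd0 hζK
  have hηζK : ∀ k : ℕ, η (ζK ^ k) = (-1 : ℂ) ^ (m * k) := by
    intro k
    rw [hζKdef, ← pow_mul, hηpow]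
  have h2K : (2 : K) ≠ 0 := Ring.two_ne_zero hchar
  have hsqx : ∀ x : K, x ≠ 0 → η x * η x = 1 := by
    intro x hx
    rw [← MulChar.mul_apply, hη2', MulChar.one_apply (isUnit_iff_ne_zero.mpr hx)]
  have hζKj_ne : ∀ j : ℕ, 0 < j → j < d → (1 : K) - ζK ^ j ≠ 0 := by
    intro j h0 h1 hcon
    exact hζK.pow_ne_one_of_pos_of_lt h0.ne' h1 (sub_eq_zero.mp hcon).symm
  obtain ⟨b, hb⟩ : ∃ b, a = b + 1 := ⟨a - 1, by omega⟩
  obtain ⟨t, ht⟩ := Nat.even_mul_succ_self b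
  -- ht : b * (b + 1) = t + t
  have hdd : d * (d - 2) = 8 * t := by
    have h1 : d - 2 = b + b := by omega
    rw [h1, ha, hb]
    have h2 : (b + 1 + (b + 1)) * (b + b) = 4 * (b * (b + 1)) := by ring
    rw [h2, ht]; ring
  have hT : d * (d - 2) / 8 = t := by
    rw [hdd, Nat.mul_div_cancel_left t (by norm_num)]
  rw [hηo_neg, ← pow_mul, hT]
  have hcast : ((2 * d : ℕ) : K) = 2 * (d : K) := by push_cast; ring
  rw [hcast, map_mul, ← hprodd, map_prod]
  have hsplitI : Finset.Ioo 0 d = (Finset.Ioo 0 a) ∪ insert a (Finset.Ioo a d) := by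
    ext j; simp only [Finset.mem_union, Finset.mem_insert, Finset.mem_Ioo]; omega
  have hdisj : Disjoint (Finset.Ioo 0 a) (insert a (Finset.Ioo a d)) := by
    rw [Finset.disjoint_left]
    intro j hj hj'
    simp only [Finset.mem_Ioo] at hj
    simp only [Finset.mem_insert, Finset.mem_Ioo] at hj'
    omega
  rw [hsplitI, Finset.prod_union hdisj, Finset.prod_insert (by simp)]
  have h2' : (1 : K) - ζK ^ a = 2 := by rw [hζKa]; ring
  rw [h2']
  have hstep1 : ∏ j ∈ Finset.Ioo a d, η (1 - ζK ^ j)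
      = ∏ j ∈ Finset.Ioo 0 a, η (1 - ζK ^ (d - j)) :=
    Finset.prod_bij' (fun j _ => d - j) (fun j _ => d - j)
      (fun j hj => by
        simp only [Finset.mem_Ioo] at hj
        show d - j ∈ Finset.Ioo 0 a
        simp only [Finset.mem_Ioo]; omega)
      (fun j hj => by
        simp only [Finset.mem_Ioo] at hj
        show d - j ∈ Finset.Ioo a d
        simp only [Finset.mem_Ioo]; omega)
      (fun j hj => by
        simp only [Finset.mem_Ioo] at hj; show d - (d - j) = j; omega)
      (fun j hj => by
        simp only [Finset.mem_Ioo] at hj; show d - (d - j) = j; omega)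
      (fun j hj => by
        simp only [Finset.mem_Ioo] at hj
        rw [Nat.sub_sub_self (by omega : j ≤ d)])
  have hstep2 : ∀ j ∈ Finset.Ioo 0 a, η (1 - ζK ^ (d - j))
      = ((-1 : ℂ)) ^ (m * (a + d + j)) * η (1 - ζK ^ j) := by
    intro j hj
    simp only [Finset.mem_Ioo] at hj
    have hfac : (1 : K) - ζK ^ (d - j) = (-1) * ζK ^ (d - j) * (1 - ζK ^ j) := by
      have h1 : ζK ^ (d - j) * ζK ^ j = 1 := by
        rw [← pow_add, Nat.sub_add_cancel (by omega), hζK.pow_eq_one]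
      linear_combination -h1
    have hηneg : η (-1 : K) = ((-1 : ℂ)) ^ (a * m) := by rw [← hneg, hηpow]
    rw [hfac, map_mul, map_mul, hηneg, hηζK (d - j)]
    have hexp : ((-1 : ℂ)) ^ (a * m) * ((-1 : ℂ)) ^ (m * (d - j))
        = ((-1 : ℂ)) ^ (m * (a + d + j)) := by
      rw [← pow_add]
      apply aux_neg_one_pow
      obtain ⟨u, hu⟩ : ∃ u, d = u + j := ⟨d - j, by omega⟩
      rw [show d - j = u by omega, hu]
      have h3 : m * (a + (u + j) + j) = a * m + m * u + 2 * (m * j) := by ring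
      rw [h3, Nat.add_mul_mod_self_left]
    rw [hexp]
  rw [hstep1, Finset.prod_congr rfl hstep2, Finset.prod_mul_distrib,
    Finset.prod_pow_eq_pow_sum]
  -- compute the exponent sum
  have hra : Finset.range a = insert 0 (Finset.Ioo 0 a) := by
    ext j; simp only [Finset.mem_range, Finset.mem_insert, Finset.mem_Ioo]; omega
  have hsumid : (∑ j ∈ Finset.Ioo 0 a, j) * 2 = a * (a - 1) := by
    have h1 := Finset.sum_range_id_mul_two a
    rw [hra, Finset.sum_insert (by simp)] at h1
    simpa using h1
  have hSt : (∑ j ∈ Finset.Ioo 0 a, j) = t := by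
    have h5 : a * (a - 1) = t + t := by
      rw [hb, Nat.add_sub_cancel, Nat.mul_comm]; exact ht
    omega
  have hsum1 : ∑ j ∈ Finset.Ioo 0 a, m * (a + d + j)
      = (Finset.Ioo 0 a).card * (m * (a + d)) + m * ∑ j ∈ Finset.Ioo 0 a, j := by
    calc ∑ j ∈ Finset.Ioo 0 a, m * (a + d + j)
        = ∑ j ∈ Finset.Ioo 0 a, (m * (a + d) + m * j) := by
          apply Finset.sum_congr rfl; intro j _; ring
      _ = _ := by
          rw [Finset.sum_add_distrib, Finset.sum_const, smul_eq_mul, ← Finset.mul_sum]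
  have hNval : ∑ j ∈ Finset.Ioo 0 a, m * (a + d + j) = 2 * (3 * (m * t)) + m * t := by
    rw [hsum1, Nat.card_Ioo, hSt]
    have h6 : a - 0 - 1 = b := by omega
    rw [h6, ha, hb]
    have h7 : b * (m * ((b + 1) + ((b + 1) + (b + 1)))) = 3 * m * (b * (b + 1)) := by
      ring
    rw [h7, ht]; ring
  have hN : ((-1 : ℂ)) ^ (∑ j ∈ Finset.Ioo 0 a, m * (a + d + j))
      = ((-1 : ℂ)) ^ (m * t) := by
    rw [hNval]
    apply aux_neg_one_pow
    generalize m * t = u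
    omega
  rw [hN]
  set P := ∏ j ∈ Finset.Ioo 0 a, η (1 - ζK ^ j) with hPdef
  have hPP : P * P = 1 := by
    rw [hPdef, ← Finset.prod_mul_distrib]
    apply Finset.prod_eq_one
    intro j hj
    simp only [Finset.mem_Ioo] at hj
    exact hsqx _ (hζKj_ne j hj.1 (by omega))
  have hη22 : η 2 * η 2 = 1 := hsqx 2 h2K
  linear_combination -(((-1 : ℂ)) ^ (m * t) * P * P * hη22) - ((-1 : ℂ)) ^ (m * t) * hPP
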